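/- With LayerNorm as defined (including centering by avg), for arbitrary a, b ∈ ℝ^d, ‖LayerNorm(a; γ) − LayerNorm(b; γ)‖ ≤ 4 (|γ₁|/|γ₂|) ‖a − b‖. -/

import Mathlib

noncomputable section

/-- The constant vector whose entries all equal the mean of `v`. -/
def avg {d : ℕ} (v : EuclideanSpace ℝ (Fin d)) : EuclideanSpace ℝ (Fin d) :=
  WithLp.toLp 2 (fun _ => (∑ j, v j) / d)

/-- LayerNorm(v; γ) = γ₁ (v − avg v) / (‖v − avg v‖ + |γ₂|) + γ₃. -/
def layerNorm {d : ℕ} (γ₁ γ₂ : ℝ) (γ₃ : EuclideanSpace ℝ (Fin d))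
    (v : EuclideanSpace ℝ (Fin d)) : EuclideanSpace ℝ (Fin d) :=
  (γ₁ / (‖v - avg v‖ + |γ₂|)) • (v - avg v) + γ₃

lemma norm_avg_le {d : ℕ} (v : EuclideanSpace ℝ (Fin d)) : ‖avg v‖ ≤ ‖v‖ := by
  rcases Nat.eq_zero_or_pos d with hd | hd
  · subst hd
    simp [EuclideanSpace.norm_eq, avg]
  · have h1 : ‖avg v‖ ^ 2 ≤ ‖v‖ ^ 2 := by
      rw [EuclideanSpace.norm_eq, EuclideanSpace.norm_eq,
        Real.sq_sqrt (by positivity), Real.sq_sqrt (by positivity)]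
      simp only [avg, PiLp.toLp_apply, Real.norm_eq_abs, sq_abs, Finset.sum_const, Finset.card_univ,
        Fintype.card_fin, nsmul_eq_mul]
      have h := sq_sum_le_card_mul_sum_sq (s := (Finset.univ : Finset (Fin d))) (f := v)
      simp only [Finset.card_univ, Fintype.card_fin] at h
      have hd' : (0:ℝ) < d := by exact_mod_cast hd
      rw [div_pow]
      have he : (d:ℝ) * ((∑ j, v j) ^ 2 / (d:ℝ)^2) = (∑ j, v j)^2 / d := by
        field_simp
      rw [he, div_le_iff₀ hd']
      nlinarith [h]
    have := Real.sqrt_le_sqrt h1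
    rwa [Real.sqrt_sq (norm_nonneg _), Real.sqrt_sq (norm_nonneg _)] at this

lemma avg_sub {d : ℕ} (a b : EuclideanSpace ℝ (Fin d)) :
    avg a - avg b = avg (a - b) := by
  ext i
  simp only [avg, PiLp.sub_apply, PiLp.toLp_apply]
  rw [Finset.sum_sub_distrib]
  ring

lemma key {E : Type*} [NormedAddCommGroup E] [NormedSpace ℝ E]
    (γ₁ c : ℝ) (hc : 0 < c) (x y : E) :
    ‖(γ₁ / (‖x‖ + c)) • x - (γ₁ / (‖y‖ + c)) • y‖ ≤ 2 * |γ₁| / c * ‖x - y‖ := by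
  have hp : (0:ℝ) < ‖x‖ + c := by positivity
  have hq : (0:ℝ) < ‖y‖ + c := by positivity
  have hsplit : (γ₁ / (‖x‖ + c)) • x - (γ₁ / (‖y‖ + c)) • y
      = (γ₁ / (‖x‖ + c)) • (x - y) + (γ₁ / (‖x‖ + c) - γ₁ / (‖y‖ + c)) • y := by
    rw [smul_sub, sub_smul]; abel
  rw [hsplit]
  have h1 : ‖(γ₁ / (‖x‖ + c)) • (x - y)‖ ≤ |γ₁| / c * ‖x - y‖ := by
    rw [norm_smul, Real.norm_eq_abs, abs_div, abs_of_pos hp]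
    apply mul_le_mul_of_nonneg_right _ (norm_nonneg _)
    gcongr
    · linarith [norm_nonneg x]
  have h2 : ‖(γ₁ / (‖x‖ + c) - γ₁ / (‖y‖ + c)) • y‖ ≤ |γ₁| / c * ‖x - y‖ := by
    rw [norm_smul, Real.norm_eq_abs]
    have heq : γ₁ / (‖x‖ + c) - γ₁ / (‖y‖ + c)
        = γ₁ * (‖y‖ - ‖x‖) / ((‖x‖ + c) * (‖y‖ + c)) := by
      field_simp; ring
    rw [heq, abs_div, abs_mul, abs_of_pos (mul_pos hp hq)]
    have hxy : |‖y‖ - ‖x‖| ≤ ‖x - y‖ := by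
      rw [abs_sub_comm]; exact abs_norm_sub_norm_le x y
    calc |γ₁| * |‖y‖ - ‖x‖| / ((‖x‖ + c) * (‖y‖ + c)) * ‖y‖
        ≤ |γ₁| * ‖x - y‖ / ((‖x‖ + c) * (‖y‖ + c)) * ‖y‖ := by gcongr
      _ ≤ |γ₁| * ‖x - y‖ / ((‖x‖ + c) * (‖y‖ + c)) * (‖y‖ + c) := by
          gcongr; linarith
      _ = |γ₁| * ‖x - y‖ / (‖x‖ + c) := by
          field_simp
      _ ≤ |γ₁| * ‖x - y‖ / c := by
          gcongr
          linarith [norm_nonneg x]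
      _ = |γ₁| / c * ‖x - y‖ := by ring
  calc ‖(γ₁ / (‖x‖ + c)) • (x - y) + (γ₁ / (‖x‖ + c) - γ₁ / (‖y‖ + c)) • y‖
      ≤ ‖(γ₁ / (‖x‖ + c)) • (x - y)‖ + ‖(γ₁ / (‖x‖ + c) - γ₁ / (‖y‖ + c)) • y‖ :=
        norm_add_le _ _
    _ ≤ |γ₁| / c * ‖x - y‖ + |γ₁| / c * ‖x - y‖ := add_le_add h1 h2
    _ = 2 * |γ₁| / c * ‖x - y‖ := by ring

/-- LayerNorm is Lipschitz with constant `4|γ₁|/|γ₂|` on all of ℝ^d. -/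
theorem layerNorm_lipschitz {d : ℕ}
    (γ₁ γ₂ : ℝ) (hγ₂ : γ₂ ≠ 0) (γ₃ : EuclideanSpace ℝ (Fin d))
    (a b : EuclideanSpace ℝ (Fin d)) :
    ‖layerNorm γ₁ γ₂ γ₃ a - layerNorm γ₁ γ₂ γ₃ b‖
      ≤ 4 * (|γ₁| / |γ₂|) * ‖a - b‖ := by
  have hc : (0:ℝ) < |γ₂| := abs_pos.mpr hγ₂
  set x := a - avg a
  set y := b - avg b
  have hln : layerNorm γ₁ γ₂ γ₃ a - layerNorm γ₁ γ₂ γ₃ b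
      = (γ₁ / (‖x‖ + |γ₂|)) • x - (γ₁ / (‖y‖ + |γ₂|)) • y := by
    simp only [layerNorm, x, y]; abel
  have hxy : ‖x - y‖ ≤ 2 * ‖a - b‖ := by
    have : x - y = (a - b) - avg (a - b) := by
      simp only [x, y, ← avg_sub]; abel
    rw [this]
    calc ‖(a - b) - avg (a - b)‖ ≤ ‖a - b‖ + ‖avg (a - b)‖ := norm_sub_le _ _
      _ ≤ ‖a - b‖ + ‖a - b‖ := by gcongr; exact norm_avg_le _
      _ = 2 * ‖a - b‖ := by ring
  rw [hln]
  calc ‖(γ₁ / (‖x‖ + |γ₂|)) • x - (γ₁ / (‖y‖ + |γ₂|)) • y‖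
      ≤ 2 * |γ₁| / |γ₂| * ‖x - y‖ := key γ₁ |γ₂| hc x y
    _ ≤ 2 * |γ₁| / |γ₂| * (2 * ‖a - b‖) := by
        apply mul_le_mul_of_nonneg_left hxy; positivity
    _ = 4 * (|γ₁| / |γ₂|) * ‖a - b‖ := by ring


end
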